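/- Let n be an odd square-free integer with at least three distinct prime factors, and let Γ be a finite connected pentavalent arc-transitive graph with exactly 4n vertices. If N is a minimal normal subgroup of Aut Γ and N is solvable, then N is cyclic of prime order. -/
import Mathlib

private instance simpleGraphAutMulAction {V : Type*} {Γ : SimpleGraph V} :
    MulAction (Γ ≃g Γ) V where
  smul g v := g v
  one_smul _ := rfl
  mul_smul _ _ _ := rfl

/-- closure under adjacency plus connectivity gives everything -/
private lemma aux_closure {V : Type*} {Γ : SimpleGraph V} (hconn : Γ.Connected) (S : Set V)
    (hcl : ∀ ⦃a b : V⦄, Γ.Adj a b → a ∈ S → b ∈ S) {v : V} (hv : v ∈ S) : ∀ w, w ∈ S := by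
  have key : ∀ {u w : V}, Γ.Walk u w → u ∈ S → w ∈ S := by
    intro u w p
    induction p with
    | nil => exact id
    | cons h q ih => exact fun hu => ih (hcl h hu)
  intro w
  obtain ⟨p⟩ := hconn v w
  exact key p hv

/-- a nontrivial solvable minimal normal subgroup of a finite group is an
elementary abelian `p`-group -/
private lemma aux_pgroup {G : Type*} [Group G] [Finite G] (N : Subgroup G) (hne : N ≠ ⊥)
    (hnorm : N.Normal) (hmin : ∀ M : Subgroup G, M.Normal → M ≤ N → M ≠ ⊥ → M = N)
    (hsol : IsSolvable N) :
    ∃ p k : ℕ, p.Prime ∧ 1 ≤ k ∧ Nat.card N = p ^ k ∧ (∀ x ∈ N, x ^ p = 1) := by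
  classical
  have habel : ∀ x ∈ N, ∀ y ∈ N, x * y = y * x := by
    by_cases hC : ⁅N, N⁆ = (⊥ : Subgroup G)
    · have := Subgroup.commutator_eq_bot_iff_le_centralizer.mp hC
      intro x hx y hy
      exact (Subgroup.mem_centralizer_iff.mp (this hx) y hy).symm
    · exfalso
      have hCN : ⁅N, N⁆ = N :=
        hmin _ (Subgroup.commutator_normal N N) (Subgroup.commutator_le_left N N) hC
      have hmap : Subgroup.map N.subtype ⁅(⊤ : Subgroup N), (⊤ : Subgroup N)⁆ = ⁅N, N⁆ := by
        rw [Subgroup.map_commutator]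
        congr 1 <;> rw [← MonoidHom.range_eq_map, N.range_subtype]
      have htop : ⁅(⊤ : Subgroup N), (⊤ : Subgroup N)⁆ = (⊤ : Subgroup N) := by
        have hinj := N.subtype_injective
        apply Subgroup.map_injective hinj
        rw [hmap, hCN, ← MonoidHom.range_eq_map, N.range_subtype]
      have hder : ∀ m, derivedSeries N m = ⊤ := by
        intro m; induction m with
        | zero => rfl
        | succ m ih => rw [derivedSeries_succ, ih]; exact htop
      obtain ⟨x, hx⟩ : ∃ x : N, x ≠ 1 := by
        rcases (Subgroup.bot_or_exists_ne_one N).resolve_left hne with ⟨x, hxN, hx1⟩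
        exact ⟨⟨x, hxN⟩, by simpa [Subtype.ext_iff] using hx1⟩
      exact not_solvable_of_mem_derivedSeries hx (fun m => by rw [hder m]; trivial) hsol
  have hNnontriv : Nontrivial N := N.bot_or_nontrivial.resolve_left hne
  have hcard1 : 1 < Nat.card N := Finite.one_lt_card
  obtain ⟨p, hp, hpdvd⟩ := Nat.exists_prime_and_dvd (by omega : Nat.card N ≠ 1)
  haveI : Fact p.Prime := ⟨hp⟩
  obtain ⟨x, hxord⟩ := exists_prime_orderOf_dvd_card' (G := N) p hpdvd
  have hcomm : ∀ a b : G, a ∈ N → b ∈ N → Commute a b := fun a b ha hb => habel a ha b hb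
  let M : Subgroup G :=
    { carrier := {x | x ∈ N ∧ x ^ p = 1}
      one_mem' := ⟨N.one_mem, one_pow p⟩
      mul_mem' := fun {a b} ha hb => ⟨N.mul_mem ha.1 hb.1, by
        rw [Commute.mul_pow (hcomm a b ha.1 hb.1), ha.2, hb.2, one_mul]⟩
      inv_mem' := fun {a} ha => ⟨N.inv_mem ha.1, by rw [inv_pow, ha.2, inv_one]⟩ }
  have hMnormal : M.Normal := by
    constructor
    intro a ha g
    refine ⟨hnorm.conj_mem a ha.1 g, ?_⟩
    rw [conj_pow, ha.2, mul_one, mul_inv_cancel]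
  have hMle : M ≤ N := fun a ha => ha.1
  have hMne : M ≠ ⊥ := by
    intro h
    rw [Subgroup.eq_bot_iff_forall] at h
    have hx1 : (x : G) ≠ 1 := by
      intro h1
      have : x = 1 := Subtype.ext h1
      rw [this, orderOf_one] at hxord
      exact hp.ne_one hxord.symm
    refine hx1 (h x ⟨x.2, ?_⟩)
    have : x ^ p = 1 := by rw [← hxord]; exact pow_orderOf_eq_one x
    simpa using congrArg (Subtype.val) this
  have hMN : M = N := hmin M hMnormal hMle hMne
  have hexp : ∀ a ∈ N, a ^ p = 1 := by
    intro a ha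
    rw [← hMN] at ha
    exact ha.2
  have hpg : IsPGroup p N := by
    intro a
    refine ⟨1, ?_⟩
    rw [pow_one]
    exact Subtype.ext (by simpa using hexp a a.2)
  obtain ⟨k, hk⟩ := IsPGroup.exists_card_eq hpg
  refine ⟨p, k, hp, ?_, hk, hexp⟩
  rcases Nat.eq_zero_or_pos k with h0 | h1
  · rw [h0, pow_zero] at hk; omega
  · exact h1

/-- arithmetic: `2n` or `4n` cannot be a prime power when `n` is odd and `≠ 1` -/
private lemma aux_arith {n p a : ℕ} (hp : p.Prime) (hodd : Odd n) (hn1 : n ≠ 1)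
    (h : 2 * n = p ^ a ∨ 4 * n = p ^ a) : False := by
  have hn0 : n ≠ 0 := by rintro rfl; simp at hodd
  have h2 : 2 ∣ p ^ a := by rcases h with h | h <;> omega
  have hp2 : p = 2 := ((Nat.prime_dvd_prime_iff_eq Nat.prime_two hp).mp
    (Nat.prime_two.dvd_of_dvd_pow h2)).symm
  subst hp2
  have hndvd : n ∣ 2 ^ a := by
    rcases h with h | h
    · exact Dvd.intro_left 2 (by omega) |>.trans (dvd_of_eq h)
    · exact Dvd.intro_left 4 (by omega) |>.trans (dvd_of_eq h)
  have hcop : Nat.Coprime n 2 :=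
    (Nat.coprime_comm.mp (Nat.prime_two.coprime_iff_not_dvd.mpr
      (by rw [Nat.two_dvd_ne_zero, Nat.odd_iff.mp hodd])))
  have hcop' := Nat.Coprime.pow_right a hcop
  rw [Nat.Coprime, Nat.gcd_eq_left hndvd] at hcop'
  exact hn1 hcop'

/-- A solvable minimal normal subgroup of the automorphism group of a connected pentavalent
arc-transitive graph of order `4n` (`n` odd square-free with at least three prime factors)
is cyclic of prime order. -/
theorem solvable_minimal_normal_subgroup_is_cyclic_of_prime_order
    {V : Type*} [Fintype V] (Γ : SimpleGraph V) [DecidableRel Γ.Adj]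
    (n : ℕ) (hodd : Odd n) (hsf : Squarefree n) (hfac : 3 ≤ n.primeFactors.card)
    (hcard : Fintype.card V = 4 * n)
    (hconn : Γ.Connected) (hdeg : ∀ v : V, Γ.degree v = 5)
    (harc : ∀ ⦃u v u' v' : V⦄, Γ.Adj u v → Γ.Adj u' v' →
      ∃ g : Γ ≃g Γ, g u = u' ∧ g v = v')
    (N : Subgroup (Γ ≃g Γ)) (hne : N ≠ ⊥) (hnorm : N.Normal)
    (hmin : ∀ M : Subgroup (Γ ≃g Γ), M.Normal → M ≤ N → M ≠ ⊥ → M = N)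
    (hsol : IsSolvable N) :
    IsCyclic N ∧ ∃ r : ℕ, r.Prime ∧ Nat.card N = r := by
  classical
  haveI finG : Finite (Γ ≃g Γ) := Finite.of_injective (fun g => (g : Γ ≃g Γ).toEquiv)
    (fun a b h => RelIso.ext (fun v => congrArg (fun e => e.toFun v) h))
  obtain ⟨p, k, hp, hk1, hcardN, hexp⟩ := aux_pgroup N hne hnorm hmin hsol
  haveI : Fact p.Prime := ⟨hp⟩
  -- basic numerics
  have hn1 : n ≠ 1 := by rintro rfl; simp [Nat.primeFactors_one] at hfac
  have hn0 : n ≠ 0 := by rintro rfl; simp at hodd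
  -- the final goal once we know the cardinality is p
  have finish : Nat.card N = p → IsCyclic N ∧ ∃ r : ℕ, r.Prime ∧ Nat.card N = r :=
    fun h => ⟨isCyclic_of_prime_card h, p, hp, h⟩
  -- every vertex has a neighbour, so arc-transitivity gives vertex-transitivity
  have hnbr : ∀ u : V, ∃ w, Γ.Adj u w := by
    intro u
    rw [← SimpleGraph.degree_pos_iff_exists_adj, hdeg u]
    omega
  have htrans : ∀ u u' : V, ∃ g : Γ ≃g Γ, g • u = u' := by
    intro u u'
    obtain ⟨w, hw⟩ := hnbr u
    obtain ⟨w', hw'⟩ := hnbr u'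
    obtain ⟨g, hg, -⟩ := harc hw hw'
    exact ⟨g, hg⟩
  -- orbits of N
  have horb_mem : ∀ {a b : V}, a ∈ MulAction.orbit (↥N) b ↔ ∃ x : ↥N, x • b = a :=
    fun {a b} => MulAction.mem_orbit_iff
  have hsmul_eq : ∀ (g : Γ ≃g Γ) (v : V), g • v = g v := fun _ _ => rfl
  have hsub_smul : ∀ (x : ↥N) (a b : V), Γ.Adj a b → Γ.Adj (x • a) (x • b) :=
    fun x a b h => ((x : Γ ≃g Γ).map_adj_iff.mpr h)
  have horb_smul : ∀ (x : ↥N) (a b : V), a ∈ MulAction.orbit (↥N) b →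
      x • a ∈ MulAction.orbit (↥N) b := by
    rintro x a b ⟨z, rfl⟩
    exact ⟨x * z, mul_smul x z b⟩
  have horb_g : ∀ (g : Γ ≃g Γ) (a b : V),
      a ∈ MulAction.orbit (↥N) b → g • a ∈ MulAction.orbit (↥N) (g • b) := by
    rintro g a b ⟨x, rfl⟩
    refine ⟨⟨g * (x : Γ ≃g Γ) * g⁻¹, hnorm.conj_mem _ x.2 g⟩, ?_⟩
    show (g * (x : Γ ≃g Γ) * g⁻¹) • (g • b) = g • ((x : Γ ≃g Γ) • b)
    rw [mul_smul, mul_smul, inv_smul_smul]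
  have horb_iff : ∀ (g : Γ ≃g Γ) (a b : V),
      g • a ∈ MulAction.orbit (↥N) (g • b) ↔ a ∈ MulAction.orbit (↥N) b := by
    intro g a b
    constructor
    · intro h
      have := horb_g g⁻¹ _ _ h
      simpa using this
    · exact horb_g g a b
  -- finset versions of orbits
  let OrbF : V → Finset V := fun v => Finset.univ.filter (· ∈ MulAction.orbit (↥N) v)
  have hOrbF_mem : ∀ a v : V, a ∈ OrbF v ↔ a ∈ MulAction.orbit (↥N) v := by
    intro a v; simp [OrbF]
  have hOrbF_card : ∀ v : V, (OrbF v).card = Fintype.card (MulAction.orbit (↥N) v) := by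
    intro v
    rw [← Set.toFinset_card]
    congr 1
    ext a
    simp [OrbF, Set.mem_toFinset]
  haveI : Fintype ↥N := Fintype.ofFinite _
  have hsize_dvd : ∀ v : V, (OrbF v).card ∣ p ^ k := by
    intro v
    rw [hOrbF_card, ← hcardN, Nat.card_eq_fintype_card]
    exact ⟨_, (MulAction.card_orbit_mul_card_stabilizer_eq_card_group (↥N) v).symm⟩
  have hsize_eq : ∀ u v : V, (OrbF u).card = (OrbF v).card := by
    intro u v
    obtain ⟨g, hg⟩ := htrans u v
    apply Finset.card_bij (fun a _ => g • a)
    · intro a ha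
      rw [hOrbF_mem] at ha ⊢
      rw [← hg]
      exact horb_g g a u ha
    · intro a _ b _ hab
      exact MulAction.injective g hab
    · intro b hb
      refine ⟨g⁻¹ • b, ?_, by simp⟩
      rw [hOrbF_mem] at hb ⊢
      have := horb_g g⁻¹ b (g • u) (by rwa [hg])
      simpa using this
  -- the quotient by the orbit relation
  have hVne : Nonempty V := by
    rw [← Fintype.card_pos_iff, hcard]
    omega
  obtain ⟨v₀⟩ := hVne
  obtain ⟨w₀, hadj₀⟩ := hnbr v₀
  let S := MulAction.orbitRel (↥N) V
  let Q := Quotient S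
  haveI : Fintype Q := Fintype.ofFinite Q
  have hmk : ∀ a b : V, (Quotient.mk S a = Quotient.mk S b) ↔ a ∈ MulAction.orbit (↥N) b := by
    intro a b
    rw [Quotient.eq]
    exact MulAction.orbitRel_apply
  have hcardV : Fintype.card Q * (OrbF v₀).card = 4 * n := by
    have h1 : (Finset.univ : Finset V).card
        = ∑ B : Q, ((Finset.univ : Finset V).filter (fun a => Quotient.mk S a = B)).card :=
      Finset.card_eq_sum_card_fiberwise (fun a _ => Finset.mem_univ _)
    have h2 : ∑ B : Q, ((Finset.univ : Finset V).filter (fun a => Quotient.mk S a = B)).card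
        = (Finset.univ : Finset Q).card * (OrbF v₀).card :=
      Finset.sum_const_nat (fun B _ => by
        obtain ⟨u, rfl⟩ := Quotient.exists_rep B
        rw [← hsize_eq u v₀]
        congr 1
        ext a
        simp only [Finset.mem_filter, Finset.mem_univ, true_and]
        rw [hmk, hOrbF_mem])
    have h3 := hcard
    rw [← Finset.card_univ (α := V), h1, h2, Finset.card_univ (α := Q)] at h3
    exact h3
  -- no edges inside an orbit
  have hintra : ∀ v w : V, Γ.Adj v w → w ∉ MulAction.orbit (↥N) v := by
    intro v w hvw hworb
    have hall : ∀ a b : V, Γ.Adj a b → b ∈ MulAction.orbit (↥N) a := by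
      intro a b hab
      obtain ⟨g, hga, hgb⟩ := harc hab hvw
      have hmem : g • b ∈ MulAction.orbit (↥N) (g • a) := by
        have h1 : g • a = v := hga
        have h2 : g • b = w := hgb
        rw [h1, h2]
        exact hworb
      exact (horb_iff g b a).mp hmem
    have hclosed : ∀ ⦃a b : V⦄, Γ.Adj a b → a ∈ MulAction.orbit (↥N) v₀ →
        b ∈ MulAction.orbit (↥N) v₀ := by
      intro a b hab ha
      have hba := hall a b hab
      rwa [MulAction.orbit_eq_iff.mpr ha] at hba
    have huniv := aux_closure hconn _ hclosed (MulAction.mem_orbit_self v₀)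
    have : (OrbF v₀) = Finset.univ := by
      apply Finset.eq_univ_iff_forall.mpr
      intro a
      rw [hOrbF_mem]
      exact huniv a
    obtain ⟨a, -, hpa⟩ := (Nat.dvd_prime_pow hp).mp (hsize_dvd v₀)
    exact aux_arith hp hodd hn1 (Or.inr (by rw [← hcard, ← Finset.card_univ, ← this, hpa]))
  -- the number of neighbours lying in a fixed adjacent orbit is constant over arcs
  let mcnt : V → V → ℕ :=
    fun v w => ((Γ.neighborFinset v).filter (· ∈ MulAction.orbit (↥N) w)).card
  have hm_const : ∀ {v w v' w' : V}, Γ.Adj v w → Γ.Adj v' w' → mcnt v w = mcnt v' w' := by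
    intro v w v' w' h h'
    obtain ⟨g, hgv, hgw⟩ := harc h h'
    apply Finset.card_bij (fun a _ => g • a)
    · intro a ha
      rw [Finset.mem_filter, SimpleGraph.mem_neighborFinset] at ha ⊢
      constructor
      · have h2 : Γ.Adj (g v) (g a) := g.map_adj_iff.mpr ha.1
        rwa [hgv] at h2
      · have h3 := horb_g g a w ha.2
        have h4 : g • w = w' := hgw
        rwa [h4] at h3
    · intro a _ b _ hab
      exact MulAction.injective g hab
    · intro b hb
      rw [Finset.mem_filter, SimpleGraph.mem_neighborFinset] at hb
      refine ⟨g⁻¹ • b, ?_, by simp⟩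
      rw [Finset.mem_filter, SimpleGraph.mem_neighborFinset]
      constructor
      · have h2 : Γ.Adj (g v) b := by rw [hgv]; exact hb.1
        have h3 : Γ.Adj (g⁻¹ (g v)) (g⁻¹ b) := (g⁻¹ : Γ ≃g Γ).map_adj_iff.mpr h2
        rw [hsmul_eq]
        simpa using h3
      · have h3 := horb_g g⁻¹ b w' hb.2
        have h4 : (g⁻¹ : Γ ≃g Γ) • w' = w := by
          rw [hsmul_eq, ← hgw]
          exact g.inv_apply_self w
        rwa [h4] at h3
  have hm_pos : 1 ≤ mcnt v₀ w₀ := by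
    apply Finset.card_pos.mpr
    exact ⟨w₀, by
      rw [Finset.mem_filter, SimpleGraph.mem_neighborFinset]
      exact ⟨hadj₀, MulAction.mem_orbit_self w₀⟩⟩
  have h5 : 5 = ((Γ.neighborFinset v₀).image (fun a => Quotient.mk S a)).card * mcnt v₀ w₀ := by
    have h1 : (Γ.neighborFinset v₀).card
        = ∑ B ∈ (Γ.neighborFinset v₀).image (fun a => Quotient.mk S a),
          ((Γ.neighborFinset v₀).filter (fun a => Quotient.mk S a = B)).card :=
      Finset.card_eq_sum_card_fiberwise (fun a ha => Finset.mem_image_of_mem _ ha)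
    have h2 : ∑ B ∈ (Γ.neighborFinset v₀).image (fun a => Quotient.mk S a),
          ((Γ.neighborFinset v₀).filter (fun a => Quotient.mk S a = B)).card
        = ((Γ.neighborFinset v₀).image (fun a => Quotient.mk S a)).card * mcnt v₀ w₀ :=
      Finset.sum_const_nat (fun B hB => by
        obtain ⟨u, hu, rfl⟩ := Finset.mem_image.mp hB
        rw [SimpleGraph.mem_neighborFinset] at hu
        have : ((Γ.neighborFinset v₀).filter (fun a => Quotient.mk S a = Quotient.mk S u))
            = (Γ.neighborFinset v₀).filter (· ∈ MulAction.orbit (↥N) u) := by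
          apply Finset.filter_congr
          intro a _
          rw [hmk]
        rw [this]
        exact hm_const hu hadj₀)
    rw [← h1] at h2
    rw [← h2, ← hdeg v₀]
    rfl
  have hm15 : mcnt v₀ w₀ = 1 ∨ mcnt v₀ w₀ = 5 :=
    (Nat.Prime.eq_one_or_self_of_dvd (by norm_num) _ (Dvd.intro_left _ h5.symm))
  -- rule out `m = 5`
  have hm1 : mcnt v₀ w₀ = 1 := by
    rcases hm15 with h | h
    · exact h
    exfalso
    have hall : ∀ v w : V, Γ.Adj v w → ∀ u, Γ.Adj v u → u ∈ MulAction.orbit (↥N) w := by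
      intro v w hvw u hvu
      have hc : mcnt v w = 5 := by rw [hm_const hvw hadj₀]; exact h
      have hsub : (Γ.neighborFinset v).filter (· ∈ MulAction.orbit (↥N) w)
          = Γ.neighborFinset v := by
        apply Finset.eq_of_subset_of_card_le (Finset.filter_subset _ _)
        have hd : (Γ.neighborFinset v).card = 5 := hdeg v
        show (Γ.neighborFinset v).card ≤ mcnt v w
        rw [hd, hc]
      have hu : u ∈ (Γ.neighborFinset v).filter (· ∈ MulAction.orbit (↥N) w) := by
        rw [hsub, SimpleGraph.mem_neighborFinset]
        exact hvu
      exact (Finset.mem_filter.mp hu).2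
    have hclosed : ∀ ⦃a b : V⦄, Γ.Adj a b →
        a ∈ (MulAction.orbit (↥N) v₀ ∪ MulAction.orbit (↥N) w₀ : Set V) →
        b ∈ (MulAction.orbit (↥N) v₀ ∪ MulAction.orbit (↥N) w₀ : Set V) := by
      intro a b hab ha
      rcases ha with ha | ha
      · right
        obtain ⟨x, hx⟩ := horb_mem.mp ha
        have h1 : Γ.Adj (x⁻¹ • a) (x⁻¹ • b) := hsub_smul x⁻¹ a b hab
        have h2 : x⁻¹ • a = v₀ := by rw [← hx, inv_smul_smul]
        rw [h2] at h1
        have h3 := hall v₀ w₀ hadj₀ _ h1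
        have h4 := horb_smul x _ _ h3
        rwa [smul_inv_smul] at h4
      · left
        obtain ⟨x, hx⟩ := horb_mem.mp ha
        have h1 : Γ.Adj (x⁻¹ • a) (x⁻¹ • b) := hsub_smul x⁻¹ a b hab
        have h2 : x⁻¹ • a = w₀ := by rw [← hx, inv_smul_smul]
        rw [h2] at h1
        have h3 := hall w₀ v₀ hadj₀.symm _ h1
        have h4 := horb_smul x _ _ h3
        rwa [smul_inv_smul] at h4
    have huniv := aux_closure hconn _ hclosed (Set.mem_union_left _ (MulAction.mem_orbit_self v₀))
    have hdisj : Disjoint (OrbF v₀) (OrbF w₀) := by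
      rw [Finset.disjoint_left]
      intro z hz1 hz2
      rw [hOrbF_mem] at hz1 hz2
      have e1 : MulAction.orbit (↥N) z = MulAction.orbit (↥N) v₀ :=
        (MulAction.orbit_eq_iff (G := ↥N)).mpr hz1
      have e2 : MulAction.orbit (↥N) z = MulAction.orbit (↥N) w₀ :=
        (MulAction.orbit_eq_iff (G := ↥N)).mpr hz2
      exact hintra v₀ w₀ hadj₀ (by
        rw [← e1, e2]
        exact MulAction.mem_orbit_self w₀)
    have hun : (Finset.univ : Finset V) = OrbF v₀ ∪ OrbF w₀ := by
      apply (Finset.eq_univ_iff_forall.mpr ?_).symm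
      intro z
      rcases huniv z with hz | hz
      · exact Finset.mem_union_left _ ((hOrbF_mem z v₀).mpr hz)
      · exact Finset.mem_union_right _ ((hOrbF_mem z w₀).mpr hz)
    obtain ⟨a, -, hpa⟩ := (Nat.dvd_prime_pow hp).mp (hsize_dvd v₀)
    have hcount : 4 * n = 2 * p ^ a := by
      rw [← hcard, ← Finset.card_univ, hun, Finset.card_union_of_disjoint hdisj,
        ← hsize_eq v₀ w₀, hpa]
      ring
    exact aux_arith hp hodd hn1 (Or.inl (by linarith [hcount]))
  -- uniqueness of the neighbour in each adjacent orbit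
  have hM1 : ∀ {v w u : V}, Γ.Adj v w → Γ.Adj v u → u ∈ MulAction.orbit (↥N) w → u = w := by
    intro v w u hvw hvu huw
    have hc : mcnt v w = 1 := by rw [hm_const hvw hadj₀]; exact hm1
    refine Finset.card_le_one.mp (le_of_eq hc) u ?_ w ?_
    · rw [Finset.mem_filter, SimpleGraph.mem_neighborFinset]
      exact ⟨hvu, huw⟩
    · rw [Finset.mem_filter, SimpleGraph.mem_neighborFinset]
      exact ⟨hvw, MulAction.mem_orbit_self w⟩
  -- semiregularity
  have hsemi : ∀ x : ↥N, ∀ v : V, x • v = v → x = 1 := by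
    intro x v hx
    have hfix : ∀ w : V, x • w = w := by
      have hclosed : ∀ ⦃a b : V⦄, Γ.Adj a b →
          a ∈ {w : V | x • w = w} → b ∈ {w : V | x • w = w} := by
        intro a b hab ha
        have h0 : x • a = a := ha
        have h1 : Γ.Adj a (x • b) := by
          have h2 := hsub_smul x a b hab
          rwa [h0] at h2
        exact hM1 hab h1 ⟨x, rfl⟩
      exact fun w => aux_closure hconn _ hclosed hx w
    apply Subtype.ext
    apply RelIso.ext
    intro w
    exact hfix w
  -- orbits have full size `p ^ k`
  have horbcard : (OrbF v₀).card = p ^ k := by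
    rw [hOrbF_card, ← Nat.card_eq_fintype_card, ← hcardN]
    symm
    apply Nat.card_eq_of_bijective
      (fun x : ↥N => (⟨x • v₀, ⟨x, rfl⟩⟩ : MulAction.orbit (↥N) v₀))
    constructor
    · intro x y hxy
      have h1 : x • v₀ = y • v₀ := congrArg Subtype.val hxy
      have h2 : (y⁻¹ * x) • v₀ = v₀ := by rw [mul_smul, h1, inv_smul_smul]
      exact (inv_mul_eq_one.mp (hsemi (y⁻¹ * x) v₀ h2)).symm
    · rintro ⟨b, ⟨x, rfl⟩⟩
      exact ⟨x, rfl⟩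
  have hkey : Fintype.card Q * p ^ k = 4 * n := by rw [← horbcard]; exact hcardV
  -- final case analysis
  by_cases hp2 : p = 2
  · subst hp2
    have hk2 : k ≤ 2 := by
      by_contra hgt
      obtain ⟨t, rfl⟩ := hodd
      have h8 : (8 : ℕ) ∣ 2 ^ k := by
        have : (8 : ℕ) = 2 ^ 3 := by norm_num
        rw [this]
        exact pow_dvd_pow 2 (by omega)
      obtain ⟨c, hc⟩ := h8
      obtain ⟨d, hd⟩ : ∃ d, Fintype.card Q * c = d := ⟨_, rfl⟩
      have h9 : Fintype.card Q * (8 * c) = 4 * (2 * t + 1) := by rw [← hc]; exact hkey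
      have h10 : Fintype.card Q * (8 * c) = 8 * d := by rw [← hd]; ring
      omega
    rcases Nat.lt_or_ge k 2 with hk | hk
    · have hk1' : k = 1 := by omega
      subst hk1'
      exact finish (by rw [hcardN, pow_one])
    · have hk2' : k = 2 := by omega
      subst hk2'
      exfalso
      have hQn : Fintype.card Q = n := by
        have : Fintype.card Q * 4 = 4 * n := by rw [← hkey]; norm_num
        omega
      -- quotient graph
      let ΓQ : SimpleGraph Q := SimpleGraph.fromRel
        (fun A B => ∃ a b : V, Γ.Adj a b ∧ Quotient.mk S a = A ∧ Quotient.mk S b = B)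
      haveI : DecidableRel ΓQ.Adj := Classical.decRel _
      have hdegQ : ∀ v : V, ΓQ.degree (Quotient.mk S v) = 5 := by
        intro v
        have hbij : (Γ.neighborFinset v).card = (ΓQ.neighborFinset (Quotient.mk S v)).card := by
          apply Finset.card_bij (fun a _ => Quotient.mk S a)
          · intro a ha
            rw [SimpleGraph.mem_neighborFinset] at ha ⊢
            rw [SimpleGraph.fromRel_adj]
            refine ⟨?_, Or.inl ⟨v, a, ha, rfl, rfl⟩⟩
            intro hEq
            exact hintra v a ha ((hmk a v).mp hEq.symm)
          · intro a ha b hb hab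
            rw [SimpleGraph.mem_neighborFinset] at ha hb
            exact hM1 hb ha ((hmk a b).mp hab)
          · intro B hB
            rw [SimpleGraph.mem_neighborFinset, SimpleGraph.fromRel_adj] at hB
            obtain ⟨hBne, h | h⟩ := hB
            · obtain ⟨a, b, hab, ha, hb⟩ := h
              obtain ⟨x, hx⟩ := horb_mem.mp ((hmk a v).mp ha)
              refine ⟨x⁻¹ • b, ?_, ?_⟩
              · rw [SimpleGraph.mem_neighborFinset]
                have h1 := hsub_smul x⁻¹ a b hab
                rwa [show x⁻¹ • a = v by rw [← hx, inv_smul_smul]] at h1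
              · rw [← hb]
                exact (hmk _ b).mpr ⟨x⁻¹, rfl⟩
            · obtain ⟨a, b, hab, ha, hb⟩ := h
              obtain ⟨x, hx⟩ := horb_mem.mp ((hmk b v).mp hb)
              refine ⟨x⁻¹ • a, ?_, ?_⟩
              · rw [SimpleGraph.mem_neighborFinset]
                have h1 := hsub_smul x⁻¹ b a hab.symm
                rwa [show x⁻¹ • b = v by rw [← hx, inv_smul_smul]] at h1
              · rw [← ha]
                exact (hmk _ a).mpr ⟨x⁻¹, rfl⟩
        have hd5 : (Γ.neighborFinset v).card = 5 := hdeg v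
        rw [hbij] at hd5
        exact hd5
      have hsum : ∑ A : Q, ΓQ.degree A = 5 * n := by
        have h1 : ∑ A : Q, ΓQ.degree A = ∑ _A : Q, 5 :=
          Finset.sum_congr rfl (fun A _ => by
            obtain ⟨u, rfl⟩ := Quotient.exists_rep A
            exact hdegQ u)
        rw [h1, Finset.sum_const, smul_eq_mul, Finset.card_univ, hQn, mul_comm]
      have heven := SimpleGraph.sum_degrees_eq_twice_card_edges ΓQ
      rw [hsum] at heven
      obtain ⟨E, hE⟩ : ∃ E, ΓQ.edgeFinset.card = E := ⟨_, rfl⟩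
      rw [hE] at heven
      obtain ⟨t, rfl⟩ := hodd
      omega
  · -- p is odd
    have hpk_n : p ^ k ∣ n := by
      have h1 : p ^ k ∣ 4 * n := ⟨Fintype.card Q, by rw [← hkey]; ring⟩
      have hcp2 : Nat.Coprime p 2 := (Nat.coprime_primes hp Nat.prime_two).mpr hp2
      have hcp4 : Nat.Coprime (p ^ k) 4 := by
        have : (4 : ℕ) = 2 ^ 2 := by norm_num
        rw [this]
        exact Nat.Coprime.pow _ _ hcp2
      exact hcp4.dvd_of_dvd_mul_left h1
    have hkeq1 : k = 1 := by
      by_contra hk'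
      have hk2 : 2 ≤ k := by omega
      have hpp : p * p ∣ n := by
        refine dvd_trans ?_ hpk_n
        have : p * p = p ^ 2 := by ring
        rw [this]
        exact pow_dvd_pow p hk2
      exact hp.ne_one (Nat.isUnit_iff.mp (hsf p hpp))
    subst hkeq1
    exact finish (by rw [hcardN, pow_one])
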